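/- Let M be an n×n real Metzler matrix (all off-diagonal entries nonnegative). Then M has a real eigenvalue μ such that every (complex) eigenvalue λ of M satisfies Re λ ≤ μ; in other words, the spectral abscissa of a Metzler matrix is itself an eigenvalue. -/

import Mathlib

open Matrix Polynomial Filter Topology Finset


open Matrix Polynomial

variable {n : ℕ}

lemma eval_charpoly' (B : Matrix (Fin n) (Fin n) ℂ) (z : ℂ) :
    (Matrix.charpoly B).eval z = (z • (1 : Matrix (Fin n) (Fin n) ℂ) - B).det := by
  rw [Matrix.charpoly, eval_det, matPolyEquiv_charmatrix]
  simp [smul_one_eq_diagonal]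

lemma multiset_exists_fn {α : Type*} (m : Multiset α) {n : ℕ} (h : Multiset.card m = n) :
    ∃ f : Fin n → α, m = Multiset.map f Finset.univ.val := by
  subst h
  refine ⟨fun i => m.toList.get (Fin.cast (by simp) i), ?_⟩
  rw [Fin.univ_val_map]
  conv_lhs => rw [← Multiset.coe_toList m]
  congr 1
  conv_lhs => rw [← List.ofFn_get m.toList]
  apply List.ofFn_congr
  simp

section
variable (B : Matrix (Fin n) (Fin n) ℂ) (d : Fin n → ℂ)
  (hd : B.charpoly.roots = Multiset.map d Finset.univ.val)

include hd

lemma charpoly_eq_prod : B.charpoly = ∏ i, (X - C (d i)) := by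
  conv_lhs => rw [(IsAlgClosed.splits _).eq_prod_roots_of_monic B.charpoly_monic, hd]
  rw [Finset.prod_eq_multiset_prod, Multiset.map_map]
  rfl

lemma charpoly_eval_eq_prod (z : ℂ) : B.charpoly.eval z = ∏ i, (z - d i) := by
  rw [charpoly_eq_prod B d hd, eval_prod]
  simp

lemma det_smul_one_sub_pow (k : ℕ) (hk : k ≠ 0) (t : ℂ) :
    (t • (1 : Matrix (Fin n) (Fin n) ℂ) - B ^ k).det = ∏ i, (t - d i ^ k) := by
  classical
  have neg_one_sq_pow : ∀ m : ℕ, ((-1 : ℂ)) ^ m * (-1) ^ m = 1 := by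
    intro m
    rw [← pow_add, show m + m = 2 * m by ring, pow_mul, neg_one_sq, one_pow]
  set q : Polynomial ℂ := X ^ k - C t with hq
  have hqm : q.Monic := monic_X_pow_sub_C t hk
  have hqd : q.natDegree = k := natDegree_X_pow_sub_C
  have hqcard : Multiset.card q.roots = k := by
    rw [← hqd, ← splits_iff_card_roots]; exact IsAlgClosed.splits _
  obtain ⟨w, hw⟩ := multiset_exists_fn q.roots hqcard
  have hqprod : q = ∏ j, (X - C (w j)) := by
    conv_lhs => rw [(IsAlgClosed.splits _).eq_prod_roots_of_monic hqm, hw]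
    rw [Finset.prod_eq_multiset_prod, Multiset.map_map]
    rfl
  -- evaluate q at B, as a list product since matrices do not commute
  have haev : B ^ k - t • 1 = (List.ofFn (fun j => B - w j • 1)).prod := by
    have h1 : (aeval B) q = B ^ k - t • 1 := by
      simp [hq, Algebra.algebraMap_eq_smul_one]
    have h2 : (aeval B) q = (List.ofFn (fun j => B - w j • 1)).prod := by
      rw [hqprod, ← List.prod_ofFn, map_list_prod]
      rw [List.map_ofFn]
      exact congrArg List.prod (congrArg List.ofFn (funext fun j => by
        simp [Algebra.algebraMap_eq_smul_one]))
    rw [← h1, h2]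
  have hdet : (B ^ k - t • 1).det = ∏ j, (B - w j • 1).det := by
    rw [haev, ← Matrix.coe_detMonoidHom, map_list_prod, List.map_ofFn, List.prod_ofFn]
    rfl
  have hfac : ∀ j, (B - w j • 1).det = (-1) ^ n * ∏ i, (w j - d i) := by
    intro j
    rw [← charpoly_eval_eq_prod B d hd, eval_charpoly']
    rw [show w j • (1 : Matrix (Fin n) (Fin n) ℂ) - B = -(B - w j • 1) from (neg_sub _ _).symm]
    rw [Matrix.det_neg, Fintype.card_fin, ← mul_assoc, neg_one_sq_pow, one_mul]
  have hqev : ∀ i, ∏ j, (w j - d i) = (-1) ^ k * (d i ^ k - t) := by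
    intro i
    have heval : q.eval (d i) = ∏ j, (d i - w j) := by
      rw [hqprod, eval_prod]; simp
    have h2 : ∏ j, (w j - d i) = (-1) ^ k * ∏ j, (d i - w j) := by
      calc ∏ j, (w j - d i) = ∏ j : Fin k, (-1) * (d i - w j) :=
            Finset.prod_congr rfl fun j _ => by ring
        _ = (-1) ^ k * ∏ j, (d i - w j) := by
            rw [Finset.prod_mul_distrib, Finset.prod_const, Finset.card_univ, Fintype.card_fin]
    rw [h2, ← heval]
    simp [hq]
  have main : (t • (1 : Matrix (Fin n) (Fin n) ℂ) - B ^ k).det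
      = (-1) ^ n * (B ^ k - t • 1).det := by
    rw [show t • (1 : Matrix (Fin n) (Fin n) ℂ) - B ^ k = -(B ^ k - t • 1) from (neg_sub _ _).symm]
    rw [Matrix.det_neg, Fintype.card_fin]
  rw [main, hdet]
  calc (-1 : ℂ) ^ n * ∏ j, (B - w j • 1).det
      = (-1) ^ n * ∏ j : Fin k, ((-1) ^ n * ∏ i, (w j - d i)) := by
        congr 1; exact Finset.prod_congr rfl fun j _ => hfac j
    _ = (-1) ^ n * (((-1) ^ n) ^ k * ∏ j : Fin k, ∏ i, (w j - d i)) := by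
        rw [Finset.prod_mul_distrib, Finset.prod_const, Finset.card_univ, Fintype.card_fin]
    _ = (-1) ^ n * (((-1) ^ n) ^ k * ∏ i, ∏ j : Fin k, (w j - d i)) := by
        rw [Finset.prod_comm]
    _ = (-1) ^ n * (((-1) ^ n) ^ k * ∏ i, ((-1) ^ k * (d i ^ k - t))) := by
        congr 2; exact Finset.prod_congr rfl fun i _ => hqev i
    _ = (-1) ^ n * (((-1) ^ n) ^ k * (((-1) ^ k) ^ n * ∏ i, ((-1) * (t - d i ^ k)))) := by
        congr 2
        rw [Finset.prod_mul_distrib, Finset.prod_const, Finset.card_univ, Fintype.card_fin]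
        congr 1
        exact Finset.prod_congr rfl fun i _ => by ring
    _ = ∏ i, (t - d i ^ k) := by
        rw [Finset.prod_mul_distrib, Finset.prod_const, Finset.card_univ, Fintype.card_fin]
        rw [← pow_mul, ← pow_mul, show k * n = n * k by ring]
        rw [show (-1 : ℂ) ^ n * ((-1) ^ (n * k) * ((-1) ^ (n * k) * ((-1) ^ n *
            ∏ i, (t - d i ^ k)))) = ((-1 : ℂ) ^ n * (-1) ^ n) * (((-1) ^ (n * k) *
            (-1) ^ (n * k)) * ∏ i, (t - d i ^ k)) by ring]
        rw [neg_one_sq_pow, neg_one_sq_pow, one_mul, one_mul]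

lemma trace_pow_eq_sum (k : ℕ) (hk : k ≠ 0) :
    (B ^ k).trace = ∑ i, d i ^ k := by
  classical
  have hcp : (B ^ k).charpoly = ∏ i, (X - C (d i ^ k)) := by
    apply Polynomial.funext
    intro t
    rw [eval_charpoly', det_smul_one_sub_pow B d hd k hk t, eval_prod]
    simp
  rw [Matrix.trace_eq_sum_roots_charpoly, hcp]
  have : (∏ i, (X - C (d i ^ k))) = ((Multiset.map (fun i => d i ^ k) Finset.univ.val).map
      (fun r => X - C r)).prod := by
    rw [Multiset.map_map, Finset.prod_eq_multiset_prod]; rfl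
  rw [this, roots_multiset_prod_X_sub_C]
  rfl

end

lemma mem_spectrum_iff_root (B : Matrix (Fin n) (Fin n) ℂ) (z : ℂ) :
    z ∈ spectrum ℂ B ↔ (Matrix.charpoly B).eval z = 0 := by
  rw [spectrum.mem_iff, eval_charpoly']
  rw [Matrix.isUnit_iff_isUnit_det]
  simp [Algebra.algebraMap_eq_smul_one, isUnit_iff_ne_zero]

open Matrix Polynomial

variable {n : ℕ}

lemma pow_entry_nonneg (A : Matrix (Fin n) (Fin n) ℝ) (hA : ∀ i j, 0 ≤ A i j) (k : ℕ) (hk : k ≠ 0) :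
    ∀ i j, 0 ≤ (A ^ k) i j := by
  induction k with
  | zero => simp at hk
  | succ m ih =>
    rcases Nat.eq_zero_or_pos m with hm | hm
    · subst hm; simpa using hA
    · intro i j
      rw [pow_succ, Matrix.mul_apply]
      exact Finset.sum_nonneg fun l _ => mul_nonneg (ih hm.ne' i l) (hA l j)

lemma trace_pow_nonneg (A : Matrix (Fin n) (Fin n) ℝ) (hA : ∀ i j, 0 ≤ A i j) (k : ℕ) (hk : k ≠ 0) :
    0 ≤ (A ^ k).trace :=
  Finset.sum_nonneg fun i _ => pow_entry_nonneg A hA k hk i i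

lemma map_pow_trace (A : Matrix (Fin n) (Fin n) ℝ) (k : ℕ) :
    ((A.map (Complex.ofReal ·)) ^ k).trace = Complex.ofReal ((A ^ k).trace) := by
  have : (A.map (Complex.ofReal ·)) ^ k = (A ^ k).map (Complex.ofReal ·) := by
    have := map_pow ((Complex.ofRealHom : ℝ →+* ℂ).mapMatrix (m := Fin n)) A k
    exact this.symm
  rw [this]
  simp [Matrix.trace, Matrix.diag, Matrix.map_apply]

open Matrix Polynomial Filter Topology Finset

/-- Cesàro average of `Re (u^k)` for `u` on the unit circle. -/
lemma avg_pow_re_tendsto {u : ℂ} (hu : ‖u‖ = 1) :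
    Tendsto (fun K : ℕ => (K : ℝ)⁻¹ * ∑ k ∈ Finset.range K, (u ^ k).re) atTop
      (𝓝 (if u = 1 then 1 else 0)) := by
  rcases eq_or_ne u 1 with h | h
  · subst h
    rw [if_pos rfl]
    have : ∀ᶠ K : ℕ in atTop,
        (K : ℝ)⁻¹ * ∑ k ∈ Finset.range K, ((1 : ℂ) ^ k).re = 1 := by
      filter_upwards [Filter.eventually_gt_atTop 0] with K hK
      have : ∑ k ∈ Finset.range K, ((1 : ℂ) ^ k).re = (K : ℝ) := by simp
      rw [this]
      field_simp
    exact Tendsto.congr' (this.mono fun K hK => hK.symm) tendsto_const_nhds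
  · rw [if_neg h]
    have hu1 : ‖u - 1‖ ≠ 0 := by
      simpa [sub_eq_zero] using h
    refine squeeze_zero_norm (a := fun K : ℕ => 2 / ‖u - 1‖ * (1 / (K : ℝ)))
      (fun K => ?_)
      (by simpa using tendsto_one_div_atTop_nhds_zero_nat.const_mul (2 / ‖u - 1‖))
    have h1 : ∑ k ∈ Finset.range K, (u ^ k).re = ((u ^ K - 1) / (u - 1)).re := by
      rw [← Complex.re_sum, geom_sum_eq h K]
    have h2 : ‖(u ^ K - 1) / (u - 1)‖ ≤ 2 / ‖u - 1‖ := by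
      rw [norm_div]
      apply div_le_div_of_nonneg_right ?_ ?_ |>.trans_eq rfl
      · calc ‖u ^ K - 1‖ ≤ ‖u ^ K‖ + ‖(1:ℂ)‖ := by
              simpa using norm_sub_le (u ^ K) 1
          _ = 2 := by rw [norm_pow, hu]; norm_num
      · exact norm_nonneg _
    calc ‖(K : ℝ)⁻¹ * ∑ k ∈ Finset.range K, (u ^ k).re‖
        = (K : ℝ)⁻¹ * |∑ k ∈ Finset.range K, (u ^ k).re| := by
          rw [norm_mul, Real.norm_eq_abs, Real.norm_eq_abs, abs_of_nonneg (by positivity)]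
      _ ≤ (K : ℝ)⁻¹ * (2 / ‖u - 1‖) := by
          apply mul_le_mul_of_nonneg_left ?_ (by positivity)
          rw [h1]
          exact (Complex.abs_re_le_norm _).trans h2
      _ = 2 / ‖u - 1‖ * (1 / (K : ℝ)) := by ring


lemma re_mul_re (z w : ℂ) : z.re * w.re = ((z * w).re + (z * (starRingEnd ℂ) w).re) / 2 := by
  simp only [Complex.mul_re, Complex.conj_re, Complex.conj_im]
  ring

lemma nonneg_spectral_radius_mem (n : ℕ) (hn : 0 < n) (A : Matrix (Fin n) (Fin n) ℝ)
    (hA : ∀ i j, 0 ≤ A i j) :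
    ∃ ρ : ℝ, (ρ : ℂ) ∈ spectrum ℂ (A.map (Complex.ofReal ·)) ∧
      ∀ z ∈ spectrum ℂ (A.map (Complex.ofReal ·)), ‖z‖ ≤ ρ := by
  classical
  haveI : NeZero n := ⟨hn.ne'⟩
  set B := A.map (Complex.ofReal ·) with hB
  have hcard : Multiset.card B.charpoly.roots = n := by
    have h1 : B.charpoly.roots.card = B.charpoly.natDegree :=
      splits_iff_card_roots.mp (IsAlgClosed.splits _)
    rw [h1, Matrix.charpoly_natDegree_eq_dim, Fintype.card_fin]
  obtain ⟨d, hd⟩ := multiset_exists_fn _ hcard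
  have hspec : ∀ z, z ∈ spectrum ℂ B ↔ ∃ i, d i = z := by
    intro z
    rw [mem_spectrum_iff_root, charpoly_eval_eq_prod B d hd, Finset.prod_eq_zero_iff]
    simp [sub_eq_zero, eq_comm]
  have hne : (Finset.univ : Finset (Fin n)).Nonempty := Finset.univ_nonempty
  set ρ := Finset.univ.sup' hne (fun i => ‖d i‖) with hρ
  obtain ⟨i₀, -, hi₀⟩ := Finset.exists_mem_eq_sup' hne (fun i => ‖d i‖)
  have hle : ∀ i, ‖d i‖ ≤ ρ := fun i => by
    rw [hρ]; exact Finset.le_sup' (fun i => ‖d i‖) (Finset.mem_univ i)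
  have hdi₀ : ‖d i₀‖ = ρ := (hρ.trans hi₀).symm
  have hρ0 : 0 ≤ ρ := hdi₀ ▸ norm_nonneg _
  refine ⟨ρ, ?_, ?_⟩
  swap
  · intro z hz
    obtain ⟨i, rfl⟩ := (hspec z).mp hz
    exact hle i
  rw [hspec]
  by_contra hcon
  push_neg at hcon
  -- hcon : ∀ i, d i ≠ ρ
  have hρpos : 0 < ρ := by
    rcases hρ0.lt_or_eq with h | h
    · exact h
    · exfalso
      apply hcon i₀
      have h0 : ‖d i₀‖ = 0 := by rw [hdi₀, ← h]
      rw [norm_eq_zero] at h0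
      rw [h0, ← h]
      simp
  have hρC : (ρ : ℂ) ≠ 0 := by
    simpa using hρpos.ne'
  -- normalized eigenvalues
  set e : Fin n → ℂ := fun i => d i / (ρ : ℂ) with he
  set S : Finset (Fin n) := Finset.univ.filter (fun i => ‖d i‖ = ρ) with hS
  have hi₀S : i₀ ∈ S := by simp [hS, hdi₀]
  have heS : ∀ i ∈ S, ‖e i‖ = 1 := by
    intro i hi
    rw [hS, Finset.mem_filter] at hi
    rw [he]
    simp only [norm_div, Complex.norm_real, Real.norm_eq_abs, abs_of_nonneg hρ0, hi.2]
    field_simp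
  have heS1 : ∀ i ∈ S, e i ≠ 1 := by
    intro i hi h1
    apply hcon i
    rw [he] at h1
    simp only [] at h1
    rw [div_eq_one_iff_eq hρC] at h1
    exact h1
  have heT : ∀ i ∉ S, ‖e i‖ < 1 := by
    intro i hi
    rw [hS, Finset.mem_filter] at hi
    push_neg at hi
    have := lt_of_le_of_ne (hle i) (hi (Finset.mem_univ i))
    rw [he]
    simp only [norm_div, Complex.norm_real, Real.norm_eq_abs, abs_of_nonneg hρ0]
    rw [div_lt_one hρpos]
    exact this
  -- nonnegativity of normalized traces
  have htr : ∀ k : ℕ, k ≠ 0 → 0 ≤ ∑ i, ((e i) ^ k).re := by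
    intro k hk
    have h1 : (∑ i, (d i) ^ k) = Complex.ofReal ((A ^ k).trace) := by
      rw [← trace_pow_eq_sum B d hd k hk, map_pow_trace]
    have h2 : ∑ i, (e i) ^ k = Complex.ofReal ((A ^ k).trace / ρ ^ k) := by
      rw [he]
      simp only [div_pow, ← Complex.ofReal_pow]
      rw [← Finset.sum_div, h1, Complex.ofReal_div, Complex.ofReal_pow]
    have h3 : (∑ i, ((e i) ^ k).re) = (A ^ k).trace / ρ ^ k := by
      rw [← Complex.re_sum, h2, Complex.ofReal_re]
    rw [h3]
    exact div_nonneg (trace_pow_nonneg A hA k hk) (by positivity)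
  -- the two sequences
  set φ : ℕ → ℝ := fun k => ∑ i ∈ S, ((e i) ^ k).re with hφ
  set χ : ℕ → ℝ := fun k => ∑ i ∈ Sᶜ, (‖e i‖) ^ k with hχ
  have hχ0 : ∀ k, 0 ≤ χ k := fun k => Finset.sum_nonneg fun i _ => by positivity
  have hφlower : ∀ k, -χ k ≤ φ k := by
    intro k
    rcases eq_or_ne k 0 with rfl | hk
    · have : φ 0 = S.card := by simp [hφ]
      rw [this]
      have := hχ0 0
      have : (0:ℝ) ≤ S.card := Nat.cast_nonneg _
      linarith [hχ0 0]
    · have hsplit : ∑ i, ((e i) ^ k).re = φ k + ∑ i ∈ Sᶜ, ((e i) ^ k).re := by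
        rw [hφ, ← Finset.sum_add_sum_compl S]
      have habs : |∑ i ∈ Sᶜ, ((e i) ^ k).re| ≤ χ k := by
        refine (Finset.abs_sum_le_sum_abs _ _).trans ?_
        apply Finset.sum_le_sum
        intro i hi
        calc |((e i) ^ k).re| ≤ ‖(e i) ^ k‖ := Complex.abs_re_le_norm _
          _ = (‖e i‖) ^ k := norm_pow _ _
      have := htr k hk
      rw [hsplit] at this
      have h2 := (abs_le.mp habs).2
      linarith
  have hφabs_le : ∀ k, |φ k| ≤ φ k + 2 * χ k := by
    intro k
    rcases abs_cases (φ k) with ⟨h1, _⟩ | ⟨h1, _⟩ <;> [skip; skip]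
    · rw [h1]; linarith [hχ0 k]
    · rw [h1]; linarith [hφlower k]
  have hφbound : ∀ k, |φ k| ≤ n := by
    intro k
    calc |φ k| ≤ ∑ i ∈ S, |((e i) ^ k).re| := Finset.abs_sum_le_sum_abs _ _
      _ ≤ ∑ i ∈ S, 1 := by
          apply Finset.sum_le_sum
          intro i hi
          calc |((e i) ^ k).re| ≤ ‖(e i) ^ k‖ := Complex.abs_re_le_norm _
            _ = (‖e i‖) ^ k := norm_pow _ _
            _ = 1 := by rw [heS i hi, one_pow]
      _ = S.card := by simp
      _ ≤ n := by
          have := Finset.card_le_univ S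
          rw [Fintype.card_fin] at this
          exact_mod_cast this
  -- averages
  set Avg : (ℕ → ℝ) → ℕ → ℝ := fun u K => (K : ℝ)⁻¹ * ∑ k ∈ Finset.range K, u k with hAvg
  -- (1) Avg φ → 0
  have hAφ : Tendsto (Avg φ) atTop (𝓝 0) := by
    have hswap : ∀ K : ℕ, Avg φ K =
        ∑ i ∈ S, ((K : ℝ)⁻¹ * ∑ k ∈ Finset.range K, ((e i) ^ k).re) := by
      intro K
      rw [hAvg]
      simp only [hφ]
      rw [Finset.sum_comm, Finset.mul_sum]
    rw [show (0:ℝ) = ∑ i ∈ S, (0:ℝ) by simp]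
    apply Tendsto.congr (fun K => (hswap K).symm)
    apply tendsto_finset_sum
    intro i hi
    have := avg_pow_re_tendsto (heS i hi)
    rwa [if_neg (heS1 i hi)] at this
  -- (2) Avg χ → 0
  have hAχ : Tendsto (Avg χ) atTop (𝓝 0) := by
    have hχtend : Tendsto χ atTop (𝓝 0) := by
      rw [show (0:ℝ) = ∑ i ∈ Sᶜ, (0:ℝ) by simp]
      apply tendsto_finset_sum
      intro i hi
      exact tendsto_pow_atTop_nhds_zero_of_lt_one (by positivity) (heT i (Finset.mem_compl.mp hi))
    simpa [hAvg] using hχtend.cesaro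
  -- (3) Avg |φ| → 0
  have hAabs : Tendsto (Avg (fun k => |φ k|)) atTop (𝓝 0) := by
    have hub : ∀ K, Avg (fun k => |φ k|) K ≤ Avg φ K + 2 * Avg χ K := by
      intro K
      rw [hAvg]
      simp only []
      rw [show Avg φ K + 2 * Avg χ K =
          (K : ℝ)⁻¹ * (∑ k ∈ Finset.range K, (φ k + 2 * χ k)) by
        rw [hAvg]; simp only []
        rw [Finset.sum_add_distrib]
        rw [show ∑ k ∈ Finset.range K, 2 * χ k = 2 * ∑ k ∈ Finset.range K, χ k from
          (Finset.mul_sum _ _ _).symm]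
        ring]
      apply mul_le_mul_of_nonneg_left ?_ (by positivity)
      exact Finset.sum_le_sum fun k _ => hφabs_le k
    have hlb : ∀ K, 0 ≤ Avg (fun k => |φ k|) K := by
      intro K
      rw [hAvg]
      apply mul_nonneg (by positivity)
      exact Finset.sum_nonneg fun k _ => abs_nonneg _
    have hupper : Tendsto (fun K => Avg φ K + 2 * Avg χ K) atTop (𝓝 0) := by
      have := hAφ.add (hAχ.const_mul 2)
      simpa using this
    exact tendsto_of_tendsto_of_tendsto_of_le_of_le tendsto_const_nhds hupper hlb hub
  -- (4) Avg φ² → L ≥ 1/2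
  set L : ℝ := ∑ i ∈ S, ∑ j ∈ S,
    ((if e i * e j = 1 then (1:ℝ) else 0) + (if e i * (starRingEnd ℂ) (e j) = 1 then 1 else 0)) / 2
    with hL
  have hAφ2 : Tendsto (Avg (fun k => (φ k) ^ 2)) atTop (𝓝 L) := by
    have hsq : ∀ k, (φ k) ^ 2 = ∑ i ∈ S, ∑ j ∈ S,
        (((e i * e j) ^ k).re + ((e i * (starRingEnd ℂ) (e j)) ^ k).re) / 2 := by
      intro k
      rw [hφ, sq, Finset.sum_mul_sum]
      apply Finset.sum_congr rfl
      intro i _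
      apply Finset.sum_congr rfl
      intro j _
      rw [re_mul_re ((e i) ^ k) ((e j) ^ k), map_pow, ← mul_pow, ← mul_pow]
    have hswap : ∀ K, Avg (fun k => (φ k) ^ 2) K = ∑ i ∈ S, ∑ j ∈ S,
        (((K : ℝ)⁻¹ * ∑ k ∈ Finset.range K, ((e i * e j) ^ k).re)
          + ((K : ℝ)⁻¹ * ∑ k ∈ Finset.range K, ((e i * (starRingEnd ℂ) (e j)) ^ k).re)) / 2 := by
      intro K
      rw [hAvg]
      simp only []
      rw [show ∑ k ∈ Finset.range K, (φ k)^2 = ∑ k ∈ Finset.range K, ∑ i ∈ S, ∑ j ∈ S,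
          (((e i * e j) ^ k).re + ((e i * (starRingEnd ℂ) (e j)) ^ k).re) / 2 from
        Finset.sum_congr rfl fun k _ => hsq k]
      rw [Finset.sum_comm, Finset.mul_sum]
      apply Finset.sum_congr rfl
      intro i _
      rw [Finset.sum_comm, Finset.mul_sum]
      apply Finset.sum_congr rfl
      intro j _
      rw [← Finset.sum_div, Finset.sum_add_distrib]
      ring
    rw [hL]
    apply Tendsto.congr (fun K => (hswap K).symm)
    apply tendsto_finset_sum
    intro i hi
    apply tendsto_finset_sum
    intro j hj
    have h1 : ‖e i * e j‖ = 1 := by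
      rw [norm_mul (e i) (e j), heS i hi, heS j hj, mul_one]
    have h2 : ‖e i * (starRingEnd ℂ) (e j)‖ = 1 := by
      rw [norm_mul (e i) ((starRingEnd ℂ) (e j)), heS i hi, Complex.norm_conj,
        heS j hj, mul_one]
    have t1 := avg_pow_re_tendsto h1
    have t2 := avg_pow_re_tendsto h2
    exact ((t1.add t2).div_const 2)
  have hterm : ∀ (i j : Fin n), (0:ℝ) ≤
      ((if e i * e j = 1 then (1:ℝ) else 0) + (if e i * (starRingEnd ℂ) (e j) = 1 then 1 else 0))
        / 2 := by
    intro i j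
    have h1 : (0:ℝ) ≤ (if e i * e j = 1 then (1:ℝ) else 0) := by split_ifs <;> norm_num
    have h2 : (0:ℝ) ≤ (if e i * (starRingEnd ℂ) (e j) = 1 then (1:ℝ) else 0) := by
      split_ifs <;> norm_num
    linarith
  have hLhalf : (1:ℝ)/2 ≤ L := by
    rw [hL]
    have hdiag : (1:ℝ)/2 ≤ ((if e i₀ * e i₀ = 1 then (1:ℝ) else 0)
        + (if e i₀ * (starRingEnd ℂ) (e i₀) = 1 then 1 else 0)) / 2 := by
      have hc : e i₀ * (starRingEnd ℂ) (e i₀) = 1 := by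
        rw [Complex.mul_conj, Complex.normSq_eq_norm_sq, heS i₀ hi₀S]
        norm_num
      rw [if_pos hc]
      have h1 : (0:ℝ) ≤ (if e i₀ * e i₀ = 1 then (1:ℝ) else 0) := by split_ifs <;> norm_num
      linarith
    calc (1:ℝ)/2 ≤ ((if e i₀ * e i₀ = 1 then (1:ℝ) else 0)
          + (if e i₀ * (starRingEnd ℂ) (e i₀) = 1 then 1 else 0)) / 2 := hdiag
      _ ≤ ∑ j ∈ S, ((if e i₀ * e j = 1 then (1:ℝ) else 0)
          + (if e i₀ * (starRingEnd ℂ) (e j) = 1 then 1 else 0)) / 2 :=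
          Finset.single_le_sum (fun j _ => hterm i₀ j) hi₀S
      _ ≤ L := by
          rw [hL]
          exact Finset.single_le_sum
            (fun i _ => Finset.sum_nonneg fun j _ => hterm i j) hi₀S
  -- (5) Avg φ² → 0, contradiction
  have hAφ2' : Tendsto (Avg (fun k => (φ k) ^ 2)) atTop (𝓝 0) := by
    have hub : ∀ K, Avg (fun k => (φ k) ^ 2) K ≤ (n : ℝ) * Avg (fun k => |φ k|) K := by
      intro K
      rw [hAvg]
      simp only []
      rw [show (n:ℝ) * ((K : ℝ)⁻¹ * ∑ k ∈ Finset.range K, |φ k|)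
          = (K : ℝ)⁻¹ * ∑ k ∈ Finset.range K, (n:ℝ) * |φ k| by
        rw [← Finset.mul_sum]; ring]
      apply mul_le_mul_of_nonneg_left ?_ (by positivity)
      apply Finset.sum_le_sum
      intro k _
      calc (φ k) ^ 2 = |φ k| * |φ k| := by rw [← sq_abs (φ k)]; ring
        _ ≤ (n:ℝ) * |φ k| := mul_le_mul_of_nonneg_right (hφbound k) (abs_nonneg _)
    have hlb : ∀ K, 0 ≤ Avg (fun k => (φ k) ^ 2) K := by
      intro K
      rw [hAvg]
      apply mul_nonneg (by positivity)
      exact Finset.sum_nonneg fun k _ => sq_nonneg _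
    have hupper : Tendsto (fun K => (n : ℝ) * Avg (fun k => |φ k|) K) atTop (𝓝 0) := by
      simpa using hAabs.const_mul (n:ℝ)
    exact tendsto_of_tendsto_of_tendsto_of_le_of_le tendsto_const_nhds hupper hlb hub
  have := tendsto_nhds_unique hAφ2 hAφ2'
  rw [this] at hLhalf
  linarith

/-- A Metzler matrix `M` has a real eigenvalue `μ` dominating the real parts of all of its
(complex) eigenvalues: the spectral abscissa of a Metzler matrix is itself an eigenvalue. -/
theorem metzler_spectral_abscissa_is_eigenvalue
    (n : ℕ) (hn : 0 < n) (M : Matrix (Fin n) (Fin n) ℝ)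
    (hMetzler : ∀ i j, i ≠ j → 0 ≤ M i j) :
    ∃ μ : ℝ, (μ : ℂ) ∈ spectrum ℂ (M.map (Complex.ofReal ·)) ∧
      ∀ z ∈ spectrum ℂ (M.map (Complex.ofReal ·)), z.re ≤ μ := by
  classical
  set c : ℝ := ∑ i, |M i i| with hc
  have hci : ∀ i, 0 ≤ c + M i i := by
    intro i
    have h1 : |M i i| ≤ c := by
      rw [hc]
      exact Finset.single_le_sum (fun j _ => abs_nonneg (M j j)) (Finset.mem_univ i)
    have := neg_abs_le (M i i)
    linarith
  set A : Matrix (Fin n) (Fin n) ℝ := M + c • 1 with hA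
  have hAnn : ∀ i j, 0 ≤ A i j := by
    intro i j
    rw [hA]
    by_cases h : i = j
    · subst h
      simp [Matrix.add_apply, Matrix.smul_apply, Matrix.one_apply_eq]
      linarith [hci i]
    · simp [Matrix.add_apply, Matrix.smul_apply, Matrix.one_apply_ne h]
      exact hMetzler i j h
  have hmap : A.map (Complex.ofReal ·) = M.map (Complex.ofReal ·) + (c : ℂ) • 1 := by
    ext i j
    rw [hA]
    by_cases h : i = j
    · subst h
      simp [Matrix.map_apply, Matrix.add_apply, Matrix.smul_apply, Matrix.one_apply_eq]
    · simp [Matrix.map_apply, Matrix.add_apply, Matrix.smul_apply, Matrix.one_apply_ne h]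
  have hshift : ∀ z : ℂ, z ∈ spectrum ℂ (M.map (Complex.ofReal ·)) ↔
      z + (c : ℂ) ∈ spectrum ℂ (A.map (Complex.ofReal ·)) := by
    intro z
    have hkey : (-(algebraMap ℂ (Matrix (Fin n) (Fin n) ℂ) (c : ℂ))
        + A.map (Complex.ofReal ·)) = M.map (Complex.ofReal ·) := by
      rw [hmap, Algebra.algebraMap_eq_smul_one]
      abel
    rw [spectrum.add_mem_iff, hkey]
  obtain ⟨ρ, hρmem, hρmax⟩ := nonneg_spectral_radius_mem n hn A hAnn
  refine ⟨ρ - c, ?_, ?_⟩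
  · rw [hshift]
    have : ((ρ - c : ℝ) : ℂ) + (c : ℂ) = (ρ : ℂ) := by push_cast; ring
    rw [this]
    exact hρmem
  · intro z hz
    have h1 := hρmax (z + (c : ℂ)) ((hshift z).mp hz)
    have h2 : (z + (c : ℂ)).re ≤ ‖z + (c : ℂ)‖ := Complex.re_le_norm _
    have h3 : (z + (c : ℂ)).re = z.re + c := by simp
    linarith
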